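/- Let m and d be integers with 1 ≤ d ≤ m and set p = d/m. Let S be a uniformly random d-element subset of {1, …, m}, and for 0 ≤ i ≤ m−1 set B_i = |S ∩ {i+1, …, m}| and P_i = B_i/(m−i). Let 0 < α, λ, ξ < 1 with ξ ≥ 1/m and α + ξ < 1. Then with probability at least 1 − 8·ξ^(−1)·exp( −d·λ²·(1−α−ξ)²/3 ), the following holds for all i = 0, 1, …, ⌊α·m⌋: (1−λ)·(1 + ξ/(1−α−ξ))^(−1)·p ≤ P_i ≤ (1+λ)·(1 + ξ/(1−α−ξ))·p. -/

import Mathlib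

open MeasureTheory ProbabilityTheory Filter Real
open scoped ENNReal NNReal

instance (m : ℕ) : MeasurableSpace (Finset (Fin m)) := ⊤

/-- The uniform measure on the `d`-element subsets of `{1, …, m}` (modelled as
`d`-element subsets of `Fin m`). -/
noncomputable def uniformSubset (m d : ℕ) : Measure (Finset (Fin m)) :=
  (((Finset.univ.filter fun s : Finset (Fin m) => s.card = d).card : ℝ≥0∞))⁻¹ •
    ∑ s ∈ Finset.univ.filter (fun s : Finset (Fin m) => s.card = d), Measure.dirac s

section AUX
open Finset

lemma hgc_hlp1 (i s : ℕ) (h : 0 < s) : i / s * s ≤ i ∧ i < i / s * s + s := by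
  refine ⟨Nat.div_mul_le_self i s, ?_⟩
  have h1 := Nat.div_add_mod i s
  have h2 := Nat.mod_lt i h
  calc i = s * (i / s) + i % s := h1.symm
    _ < s * (i / s) + s := Nat.add_lt_add_left h2 _
    _ = i / s * s + s := by rw [Nat.mul_comm]

lemma hgc_hlp2 (i s : ℕ) (h : 0 < s) : i ≤ (i + s - 1) / s * s ∧ (i + s - 1) / s * s ≤ i + s - 1 := by
  refine ⟨?_, Nat.div_mul_le_self _ s⟩
  have h1 := Nat.div_add_mod (i + s - 1) s
  have h2 := Nat.mod_lt (i + s - 1) h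
  rw [Nat.mul_comm]
  generalize hQ : s * ((i + s - 1) / s) = Q at h1
  omega

lemma hgc_hlp3 (i A s : ℕ) (h : 0 < s) (hiA : i ≤ A) : (i + s - 1) / s ≤ A / s + 1 := by
  have hmono : (i + s - 1) / s ≤ (A + s - 1) / s := Nat.div_le_div_right (by omega)
  refine hmono.trans ?_
  have hlt : (A + s - 1) / s < A / s + 2 := by
    rw [Nat.div_lt_iff_lt_mul h]
    have h1 := (hgc_hlp1 A s h).2
    have h2 := (hgc_hlp1 A s h).1
    generalize hQ : A / s * s = Q at h1 h2 ⊢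
    rw [Nat.add_mul]
    omega
  omega

lemma uniformSubset_apply (m d : ℕ) (E : Set (Finset (Fin m))) [DecidablePred (· ∈ E)] :
    uniformSubset m d E
      = (((Finset.univ.filter fun s : Finset (Fin m) => s.card = d).card : ℝ≥0∞))⁻¹
        * (((Finset.univ.filter fun s : Finset (Fin m) => s.card = d).filter
            (fun s => s ∈ E)).card : ℝ≥0∞) := by
  rw [uniformSubset, Measure.smul_apply, Measure.finset_sum_apply]
  rw [Finset.sum_congr rfl (fun s _ => Measure.dirac_apply' (s := E) s
    (MeasurableSpace.measurableSet_top))]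
  have : ∀ s ∈ (Finset.univ.filter fun s : Finset (Fin m) => s.card = d),
      E.indicator (1 : Finset (Fin m) → ℝ≥0∞) s = if s ∈ E then 1 else 0 := by
    intro s _
    rw [Set.indicator_apply]
    simp
  rw [Finset.sum_congr rfl this, Finset.sum_boole, smul_eq_mul]

end AUX

section AUX2
open Finset


lemma hgc_choose_mul_pow_le (M R j : ℕ) (h : R ≤ M) :
    R.choose j * M ^ j ≤ M.choose j * R ^ j := by
  induction j with
  | zero => simp
  | succ j ih =>
    have key : R.choose (j+1) * (j+1) * M ^ (j+1) ≤ M.choose (j+1) * (j+1) * R ^ (j+1) := by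
      rw [Nat.choose_succ_right_eq, Nat.choose_succ_right_eq, pow_succ, pow_succ]
      calc R.choose j * (R - j) * (M ^ j * M)
          = (R.choose j * M ^ j) * ((R - j) * M) := by ring
        _ ≤ (M.choose j * R ^ j) * ((M - j) * R) := by
            refine Nat.mul_le_mul ih ?_
            rw [Nat.sub_mul, Nat.sub_mul, Nat.mul_comm M R]
            have hjj : j * R ≤ j * M := Nat.mul_le_mul_left j h
            omega
        _ = M.choose j * (M - j) * (R ^ j * R) := by ring
    have h2 : R.choose (j+1) * M ^ (j+1) * (j+1) ≤ M.choose (j+1) * R ^ (j+1) * (j+1) := by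
      calc R.choose (j+1) * M ^ (j+1) * (j+1) = R.choose (j+1) * (j+1) * M ^ (j+1) := by ring
        _ ≤ M.choose (j+1) * (j+1) * R ^ (j+1) := key
        _ = M.choose (j+1) * R ^ (j+1) * (j+1) := by ring
    exact Nat.le_of_mul_le_mul_right h2 (Nat.succ_pos j)

lemma hgc_trinom (R j c : ℕ) : R.choose (j+c) * (j+c).choose j = R.choose j * (R-j).choose c := by
  rcases le_or_gt (j+c) R with h | h
  · have := Nat.choose_mul (n := R) (k := j+c) (s := j) (Nat.le_add_right _ _)
    simpa [Nat.add_sub_cancel_left] using this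
  · rw [Nat.choose_eq_zero_of_lt h, Nat.zero_mul]
    rcases le_or_gt j R with hj | hj
    · rw [Nat.choose_eq_zero_of_lt (show R - j < c by omega), Nat.mul_zero]
    · rw [Nat.choose_eq_zero_of_lt hj, Nat.zero_mul]

lemma hgc_vdm (A B n : ℕ) : ∑ c ∈ range (n+1), A.choose c * B.choose (n - c) = (A+B).choose n := by
  rw [Nat.add_choose_eq]
  exact (Finset.Nat.sum_antidiagonal_eq_sum_range_succ_mk
    (fun ij => A.choose ij.1 * B.choose ij.2) n).symm

lemma hgc_W_eq (R S k : ℕ) (t : ℝ) :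
    ∑ b ∈ range (k+1), (R.choose b * S.choose (k-b) : ℝ) * (1+t)^b
      = ∑ j ∈ range (k+1), (R.choose j * (R+S-j).choose (k-j) : ℝ) * t^j := by
  have expand : ∀ b ∈ range (k+1), (R.choose b * S.choose (k-b) : ℝ) * (1+t)^b
      = ∑ j ∈ range (k+1), (R.choose b * S.choose (k-b) * b.choose j : ℝ) * t^j := by
    intro b hb
    rw [Finset.mem_range] at hb
    rw [add_comm (1:ℝ) t, add_pow, Finset.mul_sum]
    rw [Finset.sum_subset (Finset.range_subset_range.2 (show b+1 ≤ k+1 by omega))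
      (by intro j hj hjb
          rw [Finset.mem_range] at hj
          have : b < j := by simpa [Finset.mem_range] using hjb
          simp [Nat.choose_eq_zero_of_lt this])]
    refine Finset.sum_congr rfl fun j hj => ?_
    push_cast
    ring
  rw [Finset.sum_congr rfl expand, Finset.sum_comm]
  refine Finset.sum_congr rfl fun j hj => ?_
  rw [Finset.mem_range] at hj
  rw [← Finset.sum_mul]
  congr 1
  have hnat : ∑ b ∈ range (k+1), R.choose b * S.choose (k-b) * b.choose j
      = R.choose j * (R+S-j).choose (k-j) := by
    have hsub : Finset.Ico j (k+1) ⊆ Finset.range (k+1) := by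
      rw [Finset.range_eq_Ico]; exact Finset.Ico_subset_Ico (Nat.zero_le _) le_rfl
    rw [← Finset.sum_subset hsub
      (by intro b hb hbj
          have : b < j := by
            rw [Finset.mem_range] at hb; rw [Finset.mem_Ico] at hbj; omega
          simp [Nat.choose_eq_zero_of_lt this])]
    rw [Finset.sum_Ico_eq_sum_range]
    have step : ∀ c ∈ range (k+1-j), R.choose (j+c) * S.choose (k-(j+c)) * (j+c).choose j
        = R.choose j * ((R-j).choose c * S.choose ((k-j)-c)) := by
      intro c hc
      rw [mul_right_comm, hgc_trinom]
      rw [show k - (j+c) = (k-j) - c from by omega]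
      ring
    rw [Finset.sum_congr rfl step, ← Finset.mul_sum]
    rw [show k+1-j = (k-j)+1 from by omega, hgc_vdm]
    rcases le_or_gt j R with hjR | hjR
    · rw [show R - j + S = R + S - j from by omega]
    · rw [Nat.choose_eq_zero_of_lt hjR, Nat.zero_mul, Nat.zero_mul]
  exact_mod_cast congrArg (Nat.cast : ℕ → ℝ) hnat

lemma hgc_W_le (R S k : ℕ) (hk : k ≤ R + S) (hM : 0 < R + S) (t : ℝ) (ht : 0 ≤ t) :
    ∑ b ∈ range (k+1), (R.choose b * S.choose (k-b) : ℝ) * (1+t)^b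
      ≤ ((R+S).choose k : ℝ) * (1 + (R:ℝ)/((R:ℝ)+(S:ℝ)) * t)^k := by
  set M := R + S with hMdef
  have hcast : ((R:ℝ)+(S:ℝ)) = (M:ℝ) := by push_cast [hMdef]; ring
  have hMpos : (0:ℝ) < (M:ℝ) := by exact_mod_cast hM
  rw [hgc_W_eq, hcast]
  rw [show (1 + (R:ℝ)/(M:ℝ) * t) = ((R:ℝ)/(M:ℝ) * t) + 1 from by ring,
    add_pow, Finset.mul_sum]
  refine Finset.sum_le_sum fun j hj => ?_
  rw [Finset.mem_range] at hj
  have hjk : j ≤ k := by omega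
  have hnat : R.choose j * (M-j).choose (k-j) * M ^ j ≤ M.choose k * k.choose j * R ^ j := by
    rw [Nat.choose_mul (n := M) (k := k) hjk]
    calc R.choose j * (M-j).choose (k-j) * M ^ j
        = (R.choose j * M ^ j) * (M-j).choose (k-j) := by ring
      _ ≤ (M.choose j * R ^ j) * (M-j).choose (k-j) :=
          Nat.mul_le_mul_right _ (hgc_choose_mul_pow_le M R j (Nat.le_add_right R S))
      _ = M.choose j * (M-j).choose (k-j) * R ^ j := by ring
  have hreal : (R.choose j * (M-j).choose (k-j) : ℝ) * (M:ℝ) ^ j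
      ≤ (M.choose k * k.choose j : ℝ) * (R:ℝ) ^ j := by exact_mod_cast hnat
  have hMj : (0:ℝ) < (M:ℝ) ^ j := by positivity
  have key : (R.choose j * (M-j).choose (k-j) : ℝ)
      ≤ (M.choose k * k.choose j : ℝ) * ((R:ℝ)/(M:ℝ)) ^ j := by
    rw [div_pow, ← mul_div_assoc, le_div_iff₀ hMj]
    exact hreal
  have htj : (0:ℝ) ≤ t ^ j := by positivity
  calc (R.choose j * (M-j).choose (k-j) : ℝ) * t ^ j
      ≤ ((M.choose k * k.choose j : ℝ) * ((R:ℝ)/(M:ℝ)) ^ j) * t ^ j := by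
        exact mul_le_mul_of_nonneg_right key htj
    _ = (M.choose k : ℝ) * (((R:ℝ)/(M:ℝ)*t) ^ j * 1 ^ (k-j) * (k.choose j : ℝ)) := by
        rw [mul_pow]; push_cast; ring

lemma hgc_W_le' (R S k : ℕ) (hk : k ≤ R + S) (hM : 0 < R + S) (z : ℝ) (hz : 0 < z) :
    ∑ b ∈ range (k+1), (R.choose b * S.choose (k-b) : ℝ) * z^b
      ≤ ((R+S).choose k : ℝ) * (1 + (R:ℝ)/((R:ℝ)+(S:ℝ)) * (z-1))^k := by
  have hMpos : (0:ℝ) < (R:ℝ)+(S:ℝ) := by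
    have h0 : (0:ℝ) < ((R+S : ℕ):ℝ) := by exact_mod_cast hM
    push_cast at h0
    linarith
  rcases le_or_gt 1 z with h1 | h1
  · have := hgc_W_le R S k hk hM (z-1) (by linarith)
    simpa using this
  · -- reflection
    have hzne : z ≠ 0 := ne_of_gt hz
    have refl1 : ∑ b ∈ range (k+1), (R.choose b * S.choose (k-b) : ℝ) * z^b
        = ∑ b ∈ range (k+1), (S.choose b * R.choose (k-b) : ℝ) * z^(k-b) := by
      rw [← Finset.sum_range_reflect]
      refine Finset.sum_congr rfl fun b hb => ?_
      rw [Finset.mem_range] at hb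
      rw [show k+1-1-b = k-b from by omega, show k-(k-b) = b from by omega]
      ring
    have refl2 : ∀ b ∈ range (k+1), (S.choose b * R.choose (k-b) : ℝ) * z^(k-b)
        = z^k * ((S.choose b * R.choose (k-b) : ℝ) * (1 + (z⁻¹ - 1))^b) := by
      intro b hb
      rw [Finset.mem_range] at hb
      have hbk : b ≤ k := by omega
      rw [show (1 + (z⁻¹ - 1)) = z⁻¹ from by ring, pow_sub₀ z hzne hbk, inv_pow]
      field_simp
    rw [refl1, Finset.sum_congr rfl refl2, ← Finset.mul_sum]
    have hS := hgc_W_le S R k (by omega) (by omega) (z⁻¹ - 1)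
      (by rw [sub_nonneg, one_le_inv_iff₀]; exact ⟨hz, h1.le⟩)
    have hzk : (0:ℝ) < z ^ k := by positivity
    calc z^k * ∑ b ∈ range (k+1), (S.choose b * R.choose (k-b) : ℝ) * (1 + (z⁻¹-1))^b
        ≤ z^k * (((S+R).choose k : ℝ) * (1 + (S:ℝ)/((S:ℝ)+(R:ℝ)) * (z⁻¹-1))^k) := by
          exact mul_le_mul_of_nonneg_left hS hzk.le
      _ = ((R+S).choose k : ℝ) * (z * (1 + (S:ℝ)/((S:ℝ)+(R:ℝ)) * (z⁻¹-1)))^k := by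
          rw [mul_pow, Nat.add_comm S R]; ring
      _ = ((R+S).choose k : ℝ) * (1 + (R:ℝ)/((R:ℝ)+(S:ℝ)) * (z-1))^k := by
          congr 2
          rw [show (S:ℝ)+(R:ℝ) = (R:ℝ)+(S:ℝ) from by ring]
          field_simp
          ring


-- E2 : x log x ≥ -exp(-1) for 0 < x
lemma hgc_xlogx_ge (x : ℝ) (hx : 0 < x) : -Real.exp (-1) ≤ x * Real.log x := by
  have h := Real.add_one_le_exp (-(1 + Real.log x))
  -- -(1+log x) + 1 ≤ exp(-(1+log x)) = exp(-1) * x⁻¹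
  have hexp : Real.exp (-(1 + Real.log x)) = Real.exp (-1) * x⁻¹ := by
    rw [Real.exp_neg, Real.exp_add, Real.exp_log hx, Real.exp_neg, mul_inv]
  rw [hexp] at h
  have := mul_le_mul_of_nonneg_left h hx.le
  rw [mul_add, mul_comm x (Real.exp (-1) * x⁻¹), mul_assoc, inv_mul_cancel₀ (ne_of_gt hx),
    mul_one] at this
  nlinarith [this]

-- E1 : exp(-c) ≤ 1 - c + c^2/2 for 0 ≤ c
lemma hgc_exp_neg_le_quad (c : ℝ) (hc : 0 ≤ c) : Real.exp (-c) ≤ 1 - c + c^2/2 := by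
  rcases le_or_gt c 1 with h1 | h1
  · have hb := Real.exp_bound (x := -c) (by rw [abs_neg, abs_of_nonneg hc]; exact h1)
      (n := 4) (by norm_num)
    have hsum : ∑ i ∈ Finset.range 4, (-c)^i / (Nat.factorial i) = 1 - c + c^2/2 - c^3/6 := by
      simp [Finset.sum_range_succ, Nat.factorial]
      ring
    rw [hsum] at hb
    have habs : |(-c)| ^ 4 * ((4+1) / ((Nat.factorial 4) * 4)) = c^4 * (5/96) := by
      rw [abs_neg, abs_of_nonneg hc]
      norm_num [Nat.factorial]
    have hb' : Real.exp (-c) - (1 - c + c^2/2 - c^3/6) ≤ c^4 * (5/96) := by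
      have := abs_le.1 hb
      calc Real.exp (-c) - (1 - c + c^2/2 - c^3/6)
          ≤ |Real.exp (-c) - (1 - c + c^2/2 - c^3/6)| := le_abs_self _
        _ ≤ |(-c)| ^ 4 * (((4:ℕ)+1) / ((Nat.factorial 4) * 4)) := by
            convert hb using 2
            norm_num
        _ = c^4 * (5/96) := by
            rw [abs_neg, abs_of_nonneg hc]; norm_num [Nat.factorial]
    nlinarith [pow_nonneg hc 3, pow_nonneg hc 4]
  · have h2 : Real.exp (-c) ≤ Real.exp (-1) := by
      apply Real.exp_le_exp.2; linarith
    have h3 : Real.exp (-1) < 1/2 := by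
      rw [Real.exp_neg]
      rw [inv_lt_comm₀ (Real.exp_pos 1) (by norm_num)]
      have := Real.exp_one_gt_d9
      norm_num at this ⊢
      linarith
    nlinarith [h2, h3]

-- hgc_A1 : lam + lam^2/3 ≤ (1+lam) * log (1+lam), for 0 ≤ lam ≤ 1
lemma hgc_A1 (lam : ℝ) (h0 : 0 ≤ lam) (h1 : lam ≤ 1) :
    lam + lam^2/3 ≤ (1+lam) * Real.log (1+lam) := by
  have hpos : (0:ℝ) < 1 + lam := by linarith
  set c : ℝ := (lam + lam^2/3)/(1+lam) with hc
  have hc0 : 0 ≤ c := by positivity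
  have hcmul : c * (1+lam) = lam + lam^2/3 := by
    rw [hc]; exact div_mul_cancel₀ _ (ne_of_gt hpos)
  have hc23 : c ≤ 2/3 := by
    rw [hc, div_le_iff₀ hpos]
    nlinarith
  have hexpc : Real.exp c ≤ 1 + c + c^2/2 + 2*c^3/9 := by
    have hb := Real.exp_bound (x := c) (by rw [abs_of_nonneg hc0]; linarith) (n := 3) (by norm_num)
    have hsum : ∑ i ∈ Finset.range 3, c^i / (Nat.factorial i) = 1 + c + c^2/2 := by
      simp [Finset.sum_range_succ, Nat.factorial]
      try ring
    rw [hsum] at hb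
    have hb' : Real.exp c - (1 + c + c^2/2) ≤ c^3 * (2/9) := by
      calc Real.exp c - (1 + c + c^2/2) ≤ |Real.exp c - (1 + c + c^2/2)| := le_abs_self _
        _ ≤ |c| ^ 3 * (((3:ℕ)+1) / ((Nat.factorial 3) * 3)) := by
            convert hb using 2
            norm_num
        _ = c^3 * (2/9) := by rw [abs_of_nonneg hc0]; norm_num [Nat.factorial]
    linarith
  have hle : Real.exp c ≤ 1 + lam := by
    -- 1 + c + c^2/2 + 2c^3/9 ≤ 1 + lam
    have key : c + c^2/2 + 2*c^3/9 ≤ lam := by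
      nlinarith [hcmul, hc0, hc23, sq_nonneg c, sq_nonneg lam, sq_nonneg (lam - c),
        mul_nonneg hc0 h0]
    linarith
  have hlog : c ≤ Real.log (1+lam) := (Real.le_log_iff_exp_le hpos).2 hle
  calc lam + lam^2/3 = c * (1+lam) := hcmul.symm
    _ ≤ Real.log (1+lam) * (1+lam) := by
        apply mul_le_mul_of_nonneg_right hlog (by linarith)
    _ = (1+lam) * Real.log (1+lam) := by ring

-- hgc_A2 : lam^2/3 ≤ lam + (1-lam) * log (1-lam), for 0 ≤ lam < 1
lemma hgc_A2 (lam : ℝ) (h0 : 0 ≤ lam) (h1 : lam < 1) :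
    lam^2/3 ≤ lam + (1-lam) * Real.log (1-lam) := by
  have hpos : (0:ℝ) < 1 - lam := by linarith
  rcases le_or_gt lam (9/20) with hcase | hcase
  · set c : ℝ := (lam - lam^2/3)/(1-lam) with hc
    have hc0 : 0 ≤ c := by
      apply div_nonneg _ hpos.le
      nlinarith
    have hcmul : c * (1-lam) = lam - lam^2/3 := by
      rw [hc]; exact div_mul_cancel₀ _ (ne_of_gt hpos)
    have hpoly : 2*(lam - lam^2/3)*(1-lam) - (lam-lam^2/3)^2 - 2*lam*(1-lam)^2 ≥ 0 := by
      nlinarith [sq_nonneg lam, mul_nonneg h0 (show (0:ℝ) ≤ 9/20 - lam by linarith),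
        mul_nonneg (mul_nonneg h0 h0) (show (0:ℝ) ≤ 9/20 - lam by linarith),
        mul_nonneg (mul_nonneg h0 h0) (show (0:ℝ) ≤ 1 - lam by linarith)]
    have hkey : 1 - c + c^2/2 ≤ 1 - lam := by
      have hid : c - c^2/2 - lam
          = (2*(lam-lam^2/3)*(1-lam) - (lam-lam^2/3)^2 - 2*lam*(1-lam)^2)/(2*(1-lam)^2) := by
        rw [hc]; field_simp
      have hden : (0:ℝ) < 2*(1-lam)^2 := by positivity
      have : 0 ≤ c - c^2/2 - lam := by
        rw [hid]; exact div_nonneg hpoly hden.le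
      linarith
    have hlog : -c ≤ Real.log (1-lam) :=
      (Real.le_log_iff_exp_le hpos).2 (le_trans (hgc_exp_neg_le_quad c hc0) hkey)
    have hmul : (1-lam) * (-c) ≤ (1-lam) * Real.log (1-lam) :=
      mul_le_mul_of_nonneg_left hlog hpos.le
    nlinarith [hcmul, hmul]
  · -- lam > 9/20
    have hxl := hgc_xlogx_ge (1-lam) hpos
    have hexp1 : Real.exp (-1) < 0.368 := by
      rw [Real.exp_neg]
      rw [inv_lt_comm₀ (Real.exp_pos 1) (by norm_num)]
      have := Real.exp_one_gt_d9
      norm_num at this ⊢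
      linarith
    nlinarith [hxl, hexp1, mul_nonneg (show (0:ℝ) ≤ lam - 9/20 by linarith)
      (show (0:ℝ) ≤ 1 - lam by linarith)]

variable {γ : Type*} [Fintype γ] [DecidableEq γ]


lemma hgc_card_inter_fiber (d b : ℕ) (R : Finset γ) (hb : b ≤ d) :
    (univ.filter fun s : Finset γ => s.card = d ∧ (s ∩ R).card = b).card
      = R.card.choose b * (Rᶜ.card).choose (d - b) := by
  rw [← Finset.card_powersetCard b R, ← Finset.card_powersetCard (d-b) Rᶜ,
    ← Finset.card_product]
  apply Finset.card_bij' (fun s _ => (s ∩ R, s \ R))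
    (fun p _ => p.1 ∪ p.2)
  · intro s hs
    rw [Finset.mem_filter] at hs
    obtain ⟨-, hcard, hinter⟩ := hs
    rw [Finset.mem_product]
    constructor
    · rw [Finset.mem_powersetCard]
      exact ⟨Finset.inter_subset_right, hinter⟩
    · rw [Finset.mem_powersetCard]
      refine ⟨fun x hx => ?_, ?_⟩
      · rw [Finset.mem_sdiff] at hx
        rw [Finset.mem_compl]
        exact hx.2
      · show (s \ R).card = d - b
        have := Finset.card_inter_add_card_sdiff s R
        omega
  · intro p hp
    rw [Finset.mem_product, Finset.mem_powersetCard, Finset.mem_powersetCard] at hp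
    obtain ⟨⟨h1sub, h1card⟩, h2sub, h2card⟩ := hp
    have hdisj : Disjoint p.1 p.2 := by
      refine Finset.disjoint_left.2 fun x hx1 hx2 => ?_
      have := h1sub hx1
      have := h2sub hx2
      rw [Finset.mem_compl] at *
      tauto
    have hint1 : p.1 ∩ R = p.1 := Finset.inter_eq_left.2 h1sub
    have hint2 : p.2 ∩ R = ∅ := by
      refine Finset.eq_empty_of_forall_notMem fun x hx => ?_
      rw [Finset.mem_inter] at hx
      have := h2sub hx.1
      rw [Finset.mem_compl] at this
      exact this hx.2
    rw [Finset.mem_filter]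
    refine ⟨Finset.mem_univ _, ?_, ?_⟩
    · rw [Finset.card_union_of_disjoint hdisj, h1card, h2card]
      omega
    · rw [Finset.union_inter_distrib_right, hint1, hint2, Finset.union_empty, h1card]
  · intro s hs
    show (s ∩ R) ∪ (s \ R) = s
    rw [Finset.union_comm]
    exact Finset.sdiff_union_inter s R
  · intro p hp
    rw [Finset.mem_product, Finset.mem_powersetCard, Finset.mem_powersetCard] at hp
    obtain ⟨⟨h1sub, h1card⟩, h2sub, h2card⟩ := hp
    have hint1 : p.1 ∩ R = p.1 := Finset.inter_eq_left.2 h1sub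
    have hint2 : p.2 ∩ R = ∅ := by
      refine Finset.eq_empty_of_forall_notMem fun x hx => ?_
      rw [Finset.mem_inter] at hx
      have := h2sub hx.1
      rw [Finset.mem_compl] at this
      exact this hx.2
    have e1 : (p.1 ∪ p.2) ∩ R = p.1 := by
      rw [Finset.union_inter_distrib_right, hint1, hint2, Finset.union_empty]
    have e2 : (p.1 ∪ p.2) \ R = p.2 := by
      ext x
      simp only [Finset.mem_sdiff, Finset.mem_union]
      constructor
      · rintro ⟨hx1 | hx2, hxR⟩
        · exact absurd (h1sub hx1) hxR
        · exact hx2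
      · intro hx2
        have := h2sub hx2
        rw [Finset.mem_compl] at this
        exact ⟨Or.inr hx2, this⟩
    rw [e1, e2]

lemma hgc_sum_pow_inter (d : ℕ) (R : Finset γ) (z : ℝ) :
    ∑ s ∈ univ.filter (fun s : Finset γ => s.card = d), z ^ (s ∩ R).card
      = ∑ b ∈ Finset.range (d+1), (R.card.choose b * (Rᶜ.card).choose (d-b) : ℝ) * z ^ b := by
  rw [← Finset.sum_fiberwise_of_maps_to (g := fun s : Finset γ => (s ∩ R).card)
    (t := Finset.range (d+1))
    (fun s hs => by
      rw [Finset.mem_filter] at hs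
      show (s ∩ R).card ∈ Finset.range (d+1)
      rw [Finset.mem_range]
      have h2 : (s ∩ R).card ≤ s.card := Finset.card_le_card Finset.inter_subset_left
      omega)]
  refine Finset.sum_congr rfl fun b hb => ?_
  rw [Finset.mem_range] at hb
  have : ∀ s ∈ (univ.filter (fun s : Finset γ => s.card = d)).filter
      (fun s => (s ∩ R).card = b), z ^ (s ∩ R).card = z ^ b := by
    intro s hs
    rw [Finset.mem_filter] at hs
    rw [hs.2]
  rw [Finset.sum_congr rfl this, Finset.sum_const, Finset.filter_filter,
    hgc_card_inter_fiber d b R (by omega)]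
  push_cast
  ring

lemma hgc_mgf_master (d : ℕ) (R : Finset γ) (hd : d ≤ Fintype.card γ) (hγ : 0 < Fintype.card γ)
    (z : ℝ) (hz : 0 < z) :
    ∑ s ∈ univ.filter (fun s : Finset γ => s.card = d), z ^ (s ∩ R).card
      ≤ ((Fintype.card γ).choose d : ℝ)
        * (1 + (R.card : ℝ)/(Fintype.card γ : ℝ) * (z-1))^d := by
  rw [hgc_sum_pow_inter]
  have hcards : R.card + Rᶜ.card = Fintype.card γ := Finset.card_add_card_compl R
  have := hgc_W_le' R.card Rᶜ.card d (by omega) (by omega) z hz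
  calc ∑ b ∈ Finset.range (d+1), (R.card.choose b * (Rᶜ.card).choose (d-b) : ℝ) * z ^ b
      ≤ ((R.card + Rᶜ.card).choose d : ℝ)
        * (1 + (R.card:ℝ)/((R.card:ℝ)+(Rᶜ.card:ℝ)) * (z-1))^d := this
    _ = ((Fintype.card γ).choose d : ℝ)
        * (1 + (R.card : ℝ)/(Fintype.card γ : ℝ) * (z-1))^d := by
        rw [hcards]
        congr 3
        rw [← hcards]
        push_cast
        ring

lemma hgc_chernoff_upper (d : ℕ) (R : Finset γ) (hd : d ≤ Fintype.card γ)
    (hγ : 0 < Fintype.card γ) (lam : ℝ) (hl0 : 0 < lam) (hl1 : lam < 1) :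
    ((univ.filter (fun s : Finset γ => s.card = d ∧
        (1+lam) * ((d:ℝ) * R.card / Fintype.card γ) < ((s ∩ R).card : ℝ))).card : ℝ)
      ≤ Real.exp (-(lam^2 * ((d:ℝ) * R.card / Fintype.card γ))/3)
          * ((Fintype.card γ).choose d : ℝ) := by
  set n : ℕ := Fintype.card γ
  set μ : ℝ := (d:ℝ) * R.card / n with hμ
  set q : ℝ := (R.card : ℝ)/(n:ℝ) with hq
  have hn : (0:ℝ) < (n:ℝ) := by exact_mod_cast hγ
  have hq0 : 0 ≤ q := by positivity
  have hμ0 : 0 ≤ μ := by positivity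
  have hμq : μ = (d:ℝ) * q := by rw [hμ, hq]; ring
  set z : ℝ := 1 + lam with hz
  have hz1 : 1 < z := by rw [hz]; linarith
  have hz0 : (0:ℝ) < z := by linarith
  set L : ℝ := Real.log z with hL
  have hL0 : 0 ≤ L := Real.log_nonneg hz1.le
  set θ : ℝ := (1+lam) * μ with hθ
  set D := univ.filter (fun s : Finset γ => s.card = d) with hD
  set bad := univ.filter (fun s : Finset γ => s.card = d ∧ θ < ((s ∩ R).card : ℝ)) with hbad
  have hsub : bad ⊆ D := by
    intro s hs
    rw [hbad, Finset.mem_filter] at hs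
    rw [hD, Finset.mem_filter]
    exact ⟨hs.1, hs.2.1⟩
  have hterm : ∀ s ∈ bad, Real.exp (θ * L) ≤ z ^ (s ∩ R).card := by
    intro s hs
    rw [hbad, Finset.mem_filter] at hs
    have : z ^ (s ∩ R).card = Real.exp (((s ∩ R).card : ℝ) * L) := by
      rw [hL, ← Real.log_pow, Real.exp_log (by positivity)]
    rw [this]
    exact Real.exp_le_exp.2 (mul_le_mul_of_nonneg_right hs.2.2.le hL0)
  have step1 : (bad.card : ℝ) * Real.exp (θ * L) ≤ ∑ s ∈ D, z ^ (s ∩ R).card := by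
    calc (bad.card : ℝ) * Real.exp (θ * L) = ∑ _s ∈ bad, Real.exp (θ * L) := by
          rw [Finset.sum_const, nsmul_eq_mul]
      _ ≤ ∑ s ∈ bad, z ^ (s ∩ R).card := Finset.sum_le_sum hterm
      _ ≤ ∑ s ∈ D, z ^ (s ∩ R).card := by
          apply Finset.sum_le_sum_of_subset_of_nonneg hsub
          intro s _ _
          positivity
  have step2 : ∑ s ∈ D, z ^ (s ∩ R).card ≤ (n.choose d : ℝ) * Real.exp (lam * μ) := by
    calc ∑ s ∈ D, z ^ (s ∩ R).card ≤ (n.choose d : ℝ) * (1 + q * (z-1))^d :=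
          hgc_mgf_master d R hd hγ z hz0
      _ ≤ (n.choose d : ℝ) * Real.exp (lam * μ) := by
          apply mul_le_mul_of_nonneg_left _ (by positivity)
          have h1 : 1 + q * (z - 1) ≤ Real.exp (q * lam) := by
            have := Real.add_one_le_exp (q * lam)
            rw [hz]
            nlinarith
          have h2 : (0:ℝ) ≤ 1 + q * (z-1) := by
            rw [hz]; nlinarith
          calc (1 + q * (z-1))^d ≤ (Real.exp (q * lam))^d := pow_le_pow_left₀ h2 h1 d
            _ = Real.exp ((d:ℝ) * (q * lam)) := by
                rw [← Real.exp_nat_mul]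
            _ = Real.exp (lam * μ) := by rw [hμq]; ring_nf
  have hbadle : (bad.card : ℝ) ≤ (n.choose d : ℝ) * Real.exp (lam * μ - θ * L) := by
    have hepos : (0:ℝ) < Real.exp (θ * L) := Real.exp_pos _
    rw [Real.exp_sub, ← mul_div_assoc, le_div_iff₀ hepos]
    calc (bad.card : ℝ) * Real.exp (θ * L) ≤ ∑ s ∈ D, z ^ (s ∩ R).card := step1
      _ ≤ (n.choose d : ℝ) * Real.exp (lam * μ) := step2
  calc (bad.card : ℝ) ≤ (n.choose d : ℝ) * Real.exp (lam * μ - θ * L) := hbadle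
    _ ≤ (n.choose d : ℝ) * Real.exp (-(lam^2 * μ)/3) := by
        apply mul_le_mul_of_nonneg_left _ (by positivity)
        apply Real.exp_le_exp.2
        have hA1 := hgc_A1 lam hl0.le hl1.le
        have : μ * (lam + lam^2/3) ≤ μ * ((1+lam) * Real.log (1+lam)) :=
          mul_le_mul_of_nonneg_left hA1 hμ0
        rw [hθ, hL, hz]
        nlinarith
    _ = Real.exp (-(lam^2 * μ)/3) * (n.choose d : ℝ) := by ring

lemma hgc_chernoff_lower (d : ℕ) (R : Finset γ) (hd : d ≤ Fintype.card γ)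
    (hγ : 0 < Fintype.card γ) (lam : ℝ) (hl0 : 0 < lam) (hl1 : lam < 1) :
    ((univ.filter (fun s : Finset γ => s.card = d ∧
        ((s ∩ R).card : ℝ) < (1-lam) * ((d:ℝ) * R.card / Fintype.card γ))).card : ℝ)
      ≤ Real.exp (-(lam^2 * ((d:ℝ) * R.card / Fintype.card γ))/3)
          * ((Fintype.card γ).choose d : ℝ) := by
  set n : ℕ := Fintype.card γ
  set μ : ℝ := (d:ℝ) * R.card / n with hμ
  set q : ℝ := (R.card : ℝ)/(n:ℝ) with hq
  have hn : (0:ℝ) < (n:ℝ) := by exact_mod_cast hγ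
  have hq0 : 0 ≤ q := by positivity
  have hq1 : q ≤ 1 := by
    rw [hq, div_le_one hn]
    exact_mod_cast Finset.card_le_card (Finset.subset_univ R) |>.trans (le_of_eq (by simp [n]))
  have hμ0 : 0 ≤ μ := by positivity
  have hμq : μ = (d:ℝ) * q := by rw [hμ, hq]; ring
  set z : ℝ := 1 - lam with hz
  have hz0 : (0:ℝ) < z := by rw [hz]; linarith
  have hz1 : z ≤ 1 := by rw [hz]; linarith
  set L : ℝ := Real.log z with hL
  have hL0 : L ≤ 0 := Real.log_nonpos hz0.le hz1
  set θ : ℝ := (1-lam) * μ with hθ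
  set D := univ.filter (fun s : Finset γ => s.card = d) with hD
  set bad := univ.filter (fun s : Finset γ => s.card = d ∧ ((s ∩ R).card : ℝ) < θ) with hbad
  have hsub : bad ⊆ D := by
    intro s hs
    rw [hbad, Finset.mem_filter] at hs
    rw [hD, Finset.mem_filter]
    exact ⟨hs.1, hs.2.1⟩
  have hterm : ∀ s ∈ bad, Real.exp (θ * L) ≤ z ^ (s ∩ R).card := by
    intro s hs
    rw [hbad, Finset.mem_filter] at hs
    have : z ^ (s ∩ R).card = Real.exp (((s ∩ R).card : ℝ) * L) := by
      rw [hL, ← Real.log_pow, Real.exp_log (by positivity)]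
    rw [this]
    exact Real.exp_le_exp.2 (mul_le_mul_of_nonpos_right hs.2.2.le hL0)
  have step1 : (bad.card : ℝ) * Real.exp (θ * L) ≤ ∑ s ∈ D, z ^ (s ∩ R).card := by
    calc (bad.card : ℝ) * Real.exp (θ * L) = ∑ _s ∈ bad, Real.exp (θ * L) := by
          rw [Finset.sum_const, nsmul_eq_mul]
      _ ≤ ∑ s ∈ bad, z ^ (s ∩ R).card := Finset.sum_le_sum hterm
      _ ≤ ∑ s ∈ D, z ^ (s ∩ R).card := by
          apply Finset.sum_le_sum_of_subset_of_nonneg hsub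
          intro s _ _
          positivity
  have step2 : ∑ s ∈ D, z ^ (s ∩ R).card ≤ (n.choose d : ℝ) * Real.exp (-(lam * μ)) := by
    calc ∑ s ∈ D, z ^ (s ∩ R).card ≤ (n.choose d : ℝ) * (1 + q * (z-1))^d :=
          hgc_mgf_master d R hd hγ z hz0
      _ ≤ (n.choose d : ℝ) * Real.exp (-(lam * μ)) := by
          apply mul_le_mul_of_nonneg_left _ (by positivity)
          have h1 : 1 + q * (z - 1) ≤ Real.exp (-(q * lam)) := by
            have := Real.add_one_le_exp (-(q * lam))
            rw [hz]
            nlinarith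
          have h2 : (0:ℝ) ≤ 1 + q * (z-1) := by
            rw [hz]
            nlinarith
          calc (1 + q * (z-1))^d ≤ (Real.exp (-(q * lam)))^d := pow_le_pow_left₀ h2 h1 d
            _ = Real.exp ((d:ℝ) * (-(q * lam))) := by rw [← Real.exp_nat_mul]
            _ = Real.exp (-(lam * μ)) := by rw [hμq]; ring_nf
  have hbadle : (bad.card : ℝ) ≤ (n.choose d : ℝ) * Real.exp (-(lam * μ) - θ * L) := by
    have hepos : (0:ℝ) < Real.exp (θ * L) := Real.exp_pos _
    rw [Real.exp_sub, ← mul_div_assoc, le_div_iff₀ hepos]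
    calc (bad.card : ℝ) * Real.exp (θ * L) ≤ ∑ s ∈ D, z ^ (s ∩ R).card := step1
      _ ≤ (n.choose d : ℝ) * Real.exp (-(lam * μ)) := step2
  calc (bad.card : ℝ) ≤ (n.choose d : ℝ) * Real.exp (-(lam * μ) - θ * L) := hbadle
    _ ≤ (n.choose d : ℝ) * Real.exp (-(lam^2 * μ)/3) := by
        apply mul_le_mul_of_nonneg_left _ (by positivity)
        apply Real.exp_le_exp.2
        have hA2 := hgc_A2 lam hl0.le hl1
        have : μ * (lam^2/3) ≤ μ * (lam + (1-lam) * Real.log (1-lam)) :=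
          mul_le_mul_of_nonneg_left hA2 hμ0
        rw [hθ, hL, hz]
        nlinarith
    _ = Real.exp (-(lam^2 * μ)/3) * (n.choose d : ℝ) := by ring


end AUX2
set_option maxHeartbeats 4000000 in
/-- Proposition 11 of "The Phase Transition of Discrepancy in Random Hypergraphs":
for a uniformly random `d`-subset `S` of `{1, …, m}`, `B_i = |S ∩ {i+1, …, m}|` and
`P_i = B_i/(m−i)`, with probability at least `1 − 8ξ⁻¹ exp(−dλ²(1−α−ξ)²/3)`, for
all `i ≤ ⌊αm⌋` we have
`(1−λ)(1 + ξ/(1−α−ξ))⁻¹ p ≤ P_i ≤ (1+λ)(1 + ξ/(1−α−ξ)) p`, where `p = d/m`. -/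
theorem hypergeometric_history_concentration (m d : ℕ) (hd1 : 1 ≤ d) (hdm : d ≤ m)
    (α lam ξ : ℝ) (hα0 : 0 < α) (hα1 : α < 1) (hlam0 : 0 < lam) (hlam1 : lam < 1)
    (hξ0 : 0 < ξ) (hξ1 : ξ < 1) (hξm : 1 / (m : ℝ) ≤ ξ) (hαξ : α + ξ < 1) :
    1 - ENNReal.ofReal (8 * ξ⁻¹ * Real.exp (-(d : ℝ) * lam ^ 2 * (1 - α - ξ) ^ 2 / 3))
      ≤ uniformSubset m d
          {s | ∀ i : ℕ, i ≤ ⌊α * m⌋₊ →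
            (1 - lam) * (1 + ξ / (1 - α - ξ))⁻¹ * ((d : ℝ) / m) ≤
                ((s.filter fun j : Fin m => i ≤ (j : ℕ)).card : ℝ) / ((m : ℝ) - i) ∧
              ((s.filter fun j : Fin m => i ≤ (j : ℕ)).card : ℝ) / ((m : ℝ) - i) ≤
                (1 + lam) * (1 + ξ / (1 - α - ξ)) * ((d : ℝ) / m)} := by
  classical
  have hm : 0 < m := hd1.trans hdm
  have hmR : (0:ℝ) < m := by exact_mod_cast hm
  have hdR : (0:ℝ) ≤ (d:ℝ) := Nat.cast_nonneg d
  have h1αξ : 0 < 1 - α - ξ := by linarith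
  have hξm1 : (1:ℝ) ≤ ξ * m := by
    rw [div_le_iff₀ hmR] at hξm
    linarith
  set s₀ : ℕ := ⌊ξ * m⌋₊ with hs₀def
  have hs₀pos : 0 < s₀ := by
    have h1 : (1:ℕ) ≤ s₀ := Nat.le_floor (by push_cast; linarith)
    omega
  have hs₀le : (s₀:ℝ) ≤ ξ * m := Nat.floor_le (by positivity)
  have hs₀R1 : (1:ℝ) ≤ (s₀:ℝ) := by exact_mod_cast hs₀pos
  have hs₀ge : ξ * m ≤ 2 * s₀ := by
    have h1 := Nat.lt_floor_add_one (ξ * m)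
    rw [← hs₀def] at h1
    linarith
  set A : ℕ := ⌊α * m⌋₊ with hAdef
  have hAle : (A:ℝ) ≤ α * m := Nat.floor_le (by positivity)
  set K : ℕ := A / s₀ + 1 with hKdef
  set c : ℝ := ξ / (1 - α - ξ) with hcdef
  have hc0 : 0 < c := div_pos hξ0 h1αξ
  have hcξ : c * (1 - α - ξ) = ξ := by
    rw [hcdef]; field_simp
  set D := Finset.univ.filter (fun s : Finset (Fin m) => s.card = d) with hDdef
  have hNval : D.card = m.choose d := by
    have h1 : Finset.univ.filter (fun s : Finset (Fin m) => s.card = d)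
        = Finset.powersetCard d Finset.univ := by
      ext s
      rw [Finset.mem_filter, Finset.mem_powersetCard]
      exact ⟨fun h => ⟨Finset.subset_univ s, h.2⟩, fun h => ⟨Finset.mem_univ s, h.2⟩⟩
    rw [hDdef, h1, Finset.card_powersetCard, Finset.card_univ, Fintype.card_fin]
  have hNpos : 0 < D.card := by rw [hNval]; exact Nat.choose_pos hdm
  set R : ℕ → Finset (Fin m) :=
    fun g => Finset.univ.filter (fun j : Fin m => g ≤ (j:ℕ)) with hRdef
  have hfilterR : ∀ (g : ℕ) (s : Finset (Fin m)),
      s.filter (fun j : Fin m => g ≤ (j:ℕ)) = s ∩ R g := by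
    intro g s
    ext x
    simp [hRdef, Finset.mem_filter, Finset.mem_inter]
  have hcardR : ∀ g, g ≤ m → ((R g).card : ℝ) = (m:ℝ) - g := by
    intro g hg
    have hnat : (R g).card = m - g := by
      have h1 : (R g).card = (Finset.Ico g m).card := by
        apply Finset.card_bij (fun (x : Fin m) _ => (x:ℕ))
        · intro x hx
          rw [hRdef] at hx
          simp only [Finset.mem_filter] at hx
          rw [Finset.mem_Ico]
          exact ⟨hx.2, x.isLt⟩
        · intro x _ y _ hxy
          exact Fin.ext hxy
        · intro n hn
          rw [Finset.mem_Ico] at hn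
          exact ⟨⟨n, hn.2⟩, by rw [hRdef]; simp [hn.1], rfl⟩
      rw [h1, Nat.card_Ico]
    rw [hnat, Nat.cast_sub hg]
  -- grid point bounds
  have hgple : ∀ k, k ≤ K → (((k * s₀ : ℕ)):ℝ) ≤ α * m + ξ * m := by
    intro k hk
    have h1 : k * s₀ ≤ K * s₀ := Nat.mul_le_mul_right s₀ hk
    have h2 : K * s₀ ≤ A + s₀ := by
      rw [hKdef, Nat.add_mul, Nat.one_mul]
      exact Nat.add_le_add_right (Nat.div_mul_le_self A s₀) s₀
    have h3 : (k * s₀ : ℕ) ≤ A + s₀ := le_trans h1 h2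
    have hr : ((k*s₀ : ℕ):ℝ) ≤ (A:ℝ) + s₀ := by exact_mod_cast h3
    linarith
  have hgpm : ∀ k, k ≤ K → (k * s₀ : ℕ) ≤ m := by
    intro k hk
    have h1 := hgple k hk
    have h2 : α * m + ξ * m < m := by nlinarith
    have h3 : ((k*s₀ : ℕ):ℝ) < (m:ℝ) := lt_of_le_of_lt h1 h2
    have h4 : (k*s₀ : ℕ) < m := by exact_mod_cast h3
    exact h4.le
  have hμlow : ∀ k, k ≤ K →
      (d:ℝ)*(1-α-ξ) ≤ (d:ℝ) * ((R (k*s₀)).card : ℝ) / m := by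
    intro k hk
    rw [hcardR _ (hgpm k hk), le_div_iff₀ hmR]
    have h1 := hgple k hk
    nlinarith
  -- bad events
  set badH : ℕ → Finset (Finset (Fin m)) := fun k => Finset.univ.filter
    (fun s : Finset (Fin m) => s.card = d ∧
      (1+lam) * ((d:ℝ) * ((R (k*s₀)).card : ℝ) / m) < ((s ∩ R (k*s₀)).card : ℝ)) with hbadHdef
  set badL : ℕ → Finset (Finset (Fin m)) := fun k => Finset.univ.filter
    (fun s : Finset (Fin m) => s.card = d ∧
      ((s ∩ R (k*s₀)).card : ℝ) < (1-lam) * ((d:ℝ) * ((R (k*s₀)).card : ℝ) / m)) with hbadLdef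
  have hfin : Fintype.card (Fin m) = m := Fintype.card_fin m
  have hHle : ∀ k, k ≤ K → ((badH k).card : ℝ)
      ≤ Real.exp (-(lam^2 * ((d:ℝ) * ((R (k*s₀)).card : ℝ) / m))/3) * (m.choose d : ℝ) := by
    intro k hk
    have h1 := hgc_chernoff_upper (γ := Fin m) d (R (k*s₀))
      (by rw [hfin]; exact hdm) (by rw [hfin]; exact hm) lam hlam0 hlam1
    rw [hfin] at h1
    exact h1
  have hLle : ∀ k, k ≤ K → ((badL k).card : ℝ)
      ≤ Real.exp (-(lam^2 * ((d:ℝ) * ((R (k*s₀)).card : ℝ) / m))/3) * (m.choose d : ℝ) := by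
    intro k hk
    have h1 := hgc_chernoff_lower (γ := Fin m) d (R (k*s₀))
      (by rw [hfin]; exact hdm) (by rw [hfin]; exact hm) lam hlam0 hlam1
    rw [hfin] at h1
    exact h1
  -- deterministic lemma
  have hdet : ∀ s : Finset (Fin m), s.card = d →
      (∀ k, k ≤ K →
        (1-lam) * ((d:ℝ) * ((R (k*s₀)).card : ℝ) / m) ≤ ((s ∩ R (k*s₀)).card : ℝ) ∧
        ((s ∩ R (k*s₀)).card : ℝ) ≤ (1+lam) * ((d:ℝ) * ((R (k*s₀)).card : ℝ) / m)) →
      ∀ i : ℕ, i ≤ A →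
        ((1 - lam) * (1 + c)⁻¹ * ((d:ℝ)/m)
            ≤ ((s.filter fun j : Fin m => i ≤ (j:ℕ)).card : ℝ) / ((m:ℝ) - i)
        ∧ ((s.filter fun j : Fin m => i ≤ (j:ℕ)).card : ℝ) / ((m:ℝ) - i)
            ≤ (1+lam) * (1 + c) * ((d:ℝ)/m)) := by
    intro s hsd hgrid i hi
    set ka := i / s₀ with hka
    set kb := (i + s₀ - 1) / s₀ with hkb
    have hfa := hgc_hlp1 i s₀ hs₀pos
    have hfb := hgc_hlp2 i s₀ hs₀pos
    have hkaK : ka ≤ K := by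
      have h1 : i / s₀ ≤ A / s₀ := Nat.div_le_div_right hi
      rw [hka, hKdef]
      omega
    have hkbK : kb ≤ K := by
      rw [hkb, hKdef]
      exact hgc_hlp3 i A s₀ hs₀pos hi
    obtain ⟨hga_lo, hga_hi⟩ := hgrid ka hkaK
    obtain ⟨hgb_lo, hgb_hi⟩ := hgrid kb hkbK
    have him : (i:ℝ) ≤ α * m := le_trans (by exact_mod_cast hi) hAle
    have hmi : (0:ℝ) < (m:ℝ) - i := by
      have hξm0 : 0 < ξ*m := by positivity
      nlinarith [him]
    have haiR : ((ka*s₀ : ℕ):ℝ) ≤ (i:ℝ) := by exact_mod_cast hfa.1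
    have hiaR : (i:ℝ) < ((ka*s₀:ℕ):ℝ) + s₀ := by
      exact_mod_cast hfa.2
    have hibR : (i:ℝ) ≤ ((kb*s₀:ℕ):ℝ) := by exact_mod_cast hfb.1
    have hbiR : ((kb*s₀:ℕ):ℝ) ≤ (i:ℝ) + s₀ := by
      have h1 : kb * s₀ ≤ i + s₀ := le_trans hfb.2 (by omega)
      exact_mod_cast h1
    have hbm : ((kb*s₀:ℕ):ℝ) ≤ α*m + ξ*m := hgple kb hkbK
    have hcarda : ((R (ka*s₀)).card : ℝ) = (m:ℝ) - (ka*s₀:ℕ) := hcardR _ (hgpm ka hkaK)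
    have hcardb : ((R (kb*s₀)).card : ℝ) = (m:ℝ) - (kb*s₀:ℕ) := hcardR _ (hgpm kb hkbK)
    have hBa : (s.filter fun j : Fin m => i ≤ (j:ℕ)).card ≤ (s ∩ R (ka*s₀)).card := by
      rw [← hfilterR]
      apply Finset.card_le_card
      intro x hx
      rw [Finset.mem_filter] at hx ⊢
      exact ⟨hx.1, le_trans hfa.1 hx.2⟩
    have hBb : (s ∩ R (kb*s₀)).card ≤ (s.filter fun j : Fin m => i ≤ (j:ℕ)).card := by
      rw [← hfilterR]
      apply Finset.card_le_card
      intro x hx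
      rw [Finset.mem_filter] at hx ⊢
      exact ⟨hx.1, le_trans hfb.1 hx.2⟩
    have hmbid : (1-α-ξ)*(m:ℝ) = m - α*m - ξ*m := by ring
    have hmb : (1-α-ξ) * m ≤ (m:ℝ) - (kb*s₀:ℕ) := by linarith [hbm, hs₀le]
    have hcmb : c * ((1-α-ξ)*m) ≤ c * ((m:ℝ)-(kb*s₀:ℕ)) :=
      mul_le_mul_of_nonneg_left hmb hc0.le
    have hcm : c * ((1-α-ξ)*m) = ξ*m := by
      have h9 : c * ((1-α-ξ)*(m:ℝ)) = (c*(1-α-ξ))*m := by ring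
      rw [h9, hcξ]
    have hmi2 : (1-α-ξ)*m ≤ (m:ℝ)-i := by
      have hξm0 : 0 ≤ ξ*m := by positivity
      have hmbid2 : (1-α-ξ)*(m:ℝ) = m - α*m - ξ*m := by ring
      linarith [him]
    have hcmi : c*((1-α-ξ)*m) ≤ c*((m:ℝ)-i) := mul_le_mul_of_nonneg_left hmi2 hc0.le
    have h1c : (0:ℝ) < 1 + c := by linarith
    constructor
    · -- lower bound
      rw [le_div_iff₀ hmi]
      have hkey : (m:ℝ) - i ≤ (1+c) * ((m:ℝ) - (kb*s₀:ℕ)) := by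
        have hexp : (1+c) * ((m:ℝ)-(kb*s₀:ℕ))
            = ((m:ℝ)-(kb*s₀:ℕ)) + c*((m:ℝ)-(kb*s₀:ℕ)) := by ring
        rw [hexp]
        linarith [hcmb, hcm, hbiR, hs₀le]
      calc (1-lam) * (1+c)⁻¹ * ((d:ℝ)/m) * ((m:ℝ)-i)
          = (1-lam) * ((d:ℝ)/m) * ((1+c)⁻¹ * ((m:ℝ)-i)) := by ring
        _ ≤ (1-lam) * ((d:ℝ)/m) * ((m:ℝ) - (kb*s₀:ℕ)) := by
            apply mul_le_mul_of_nonneg_left _ (mul_nonneg (by linarith) (by positivity))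
            rw [inv_mul_le_iff₀ h1c]
            exact hkey
        _ = (1-lam) * ((d:ℝ) * ((m:ℝ) - (kb*s₀:ℕ)) / m) := by ring
        _ = (1-lam) * ((d:ℝ) * ((R (kb*s₀)).card : ℝ) / m) := by rw [hcardb]
        _ ≤ ((s ∩ R (kb*s₀)).card : ℝ) := hgb_lo
        _ ≤ ((s.filter fun j : Fin m => i ≤ (j:ℕ)).card : ℝ) := by exact_mod_cast hBb
    · -- upper bound
      rw [div_le_iff₀ hmi]
      have hkey : (m:ℝ) - (ka*s₀:ℕ) ≤ (1+c) * ((m:ℝ) - i) := by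
        have hexp : (1+c) * ((m:ℝ)-i) = ((m:ℝ)-i) + c*((m:ℝ)-i) := by ring
        rw [hexp]
        linarith [hcmi, hcm, hiaR, hs₀le, haiR]
      calc ((s.filter fun j : Fin m => i ≤ (j:ℕ)).card : ℝ)
          ≤ ((s ∩ R (ka*s₀)).card : ℝ) := by exact_mod_cast hBa
        _ ≤ (1+lam) * ((d:ℝ) * ((R (ka*s₀)).card : ℝ) / m) := hga_hi
        _ = (1+lam) * ((d:ℝ)/m) * ((m:ℝ) - (ka*s₀:ℕ)) := by rw [hcarda]; ring
        _ ≤ (1+lam) * ((d:ℝ)/m) * ((1+c) * ((m:ℝ)-i)) := by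
            apply mul_le_mul_of_nonneg_left hkey (mul_nonneg (by linarith) (by positivity))
        _ = (1+lam) * (1+c) * ((d:ℝ)/m) * ((m:ℝ)-i) := by ring
  -- main counting bound, generic in P
  set X : ℝ := 8 * ξ⁻¹ * Real.exp (-(d : ℝ) * lam ^ 2 * (1 - α - ξ) ^ 2 / 3) with hXdef
  have hX0 : 0 ≤ X := by positivity
  have key : ∀ (P : Finset (Fin m) → Prop) (inst : DecidablePred P),
      (∀ s : Finset (Fin m), s.card = d →
        (∀ k, k ≤ K →
          (1-lam) * ((d:ℝ) * ((R (k*s₀)).card : ℝ) / m) ≤ ((s ∩ R (k*s₀)).card : ℝ) ∧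
          ((s ∩ R (k*s₀)).card : ℝ) ≤ (1+lam) * ((d:ℝ) * ((R (k*s₀)).card : ℝ) / m)) → P s) →
      1 - ENNReal.ofReal X ≤ (D.card : ℝ≥0∞)⁻¹ * ((D.filter (fun s => P s)).card : ℝ≥0∞) := by
    intro P inst hP
    have hsubset : D.filter (fun s => ¬ P s)
        ⊆ (Finset.range (K+1)).biUnion (fun k => badH k ∪ badL k) := by
      intro s hs
      rw [Finset.mem_filter] at hs
      obtain ⟨hsD, hsnP⟩ := hs
      have hsd : s.card = d := by
        rw [hDdef, Finset.mem_filter] at hsD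
        exact hsD.2
      by_contra hnB
      apply hsnP
      apply hP s hsd
      intro k hk
      have hnotin : s ∉ badH k ∪ badL k := by
        intro hmem
        exact hnB (Finset.mem_biUnion.2 ⟨k, Finset.mem_range.2 (by omega), hmem⟩)
      rw [Finset.mem_union] at hnotin
      push_neg at hnotin
      obtain ⟨hnH, hnL⟩ := hnotin
      constructor
      · by_contra hlt
        push_neg at hlt
        apply hnL
        rw [hbadLdef]
        simp only [Finset.mem_filter]
        exact ⟨Finset.mem_univ _, hsd, hlt⟩
      · by_contra hlt
        push_neg at hlt
        apply hnH
        rw [hbadHdef]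
        simp only [Finset.mem_filter]
        exact ⟨Finset.mem_univ _, hsd, hlt⟩
    have hEstar : ∀ k, k ≤ K →
        Real.exp (-(lam^2 * ((d:ℝ) * ((R (k*s₀)).card : ℝ) / m))/3)
          ≤ Real.exp (-(d : ℝ) * lam ^ 2 * (1 - α - ξ) ^ 2 / 3) := by
      intro k hk
      apply Real.exp_le_exp.2
      have hμl := hμlow k hk
      have h0 : (1-α-ξ)^2 ≤ (1-α-ξ) := by
        nlinarith [mul_nonneg h1αξ.le (show (0:ℝ) ≤ α + ξ by linarith)]
      have h1 : (d:ℝ)*(1-α-ξ)^2 ≤ (d:ℝ)*(1-α-ξ) := mul_le_mul_of_nonneg_left h0 hdR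
      have h2 : (d:ℝ)*(1-α-ξ)^2 ≤ (d:ℝ) * ((R (k*s₀)).card : ℝ) / m := le_trans h1 hμl
      nlinarith [mul_le_mul_of_nonneg_left h2 (sq_nonneg lam)]
    have hcount : ((D.filter (fun s => ¬ P s)).card : ℝ)
        ≤ ((K:ℝ)+1) * (2 * (Real.exp (-(d : ℝ) * lam ^ 2 * (1 - α - ξ) ^ 2 / 3)
            * (m.choose d : ℝ))) := by
      have h1 : (D.filter (fun s => ¬ P s)).card
          ≤ ∑ k ∈ Finset.range (K+1), (badH k ∪ badL k).card :=
        le_trans (Finset.card_le_card hsubset) Finset.card_biUnion_le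
      have h2 : ((D.filter (fun s => ¬ P s)).card : ℝ)
          ≤ ∑ k ∈ Finset.range (K+1), (((badH k).card : ℝ) + ((badL k).card : ℝ)) := by
        calc ((D.filter (fun s => ¬ P s)).card : ℝ)
            ≤ (∑ k ∈ Finset.range (K+1), ((badH k ∪ badL k).card) : ℕ) := by exact_mod_cast h1
          _ = ∑ k ∈ Finset.range (K+1), (((badH k ∪ badL k).card : ℕ) : ℝ) := by push_cast; ring
          _ ≤ ∑ k ∈ Finset.range (K+1), (((badH k).card : ℝ) + ((badL k).card : ℝ)) := by
              apply Finset.sum_le_sum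
              intro k _
              exact_mod_cast Finset.card_union_le _ _
      refine h2.trans ?_
      have h3 : ∀ k ∈ Finset.range (K+1), ((badH k).card : ℝ) + ((badL k).card : ℝ)
          ≤ 2 * (Real.exp (-(d : ℝ) * lam ^ 2 * (1 - α - ξ) ^ 2 / 3) * (m.choose d : ℝ)) := by
        intro k hk
        rw [Finset.mem_range] at hk
        have hk' : k ≤ K := by omega
        have hH := hHle k hk'
        have hL := hLle k hk'
        have hE := hEstar k hk'
        have hc1 : Real.exp (-(lam^2 * ((d:ℝ) * ((R (k*s₀)).card : ℝ) / m))/3) * (m.choose d : ℝ)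
            ≤ Real.exp (-(d : ℝ) * lam ^ 2 * (1 - α - ξ) ^ 2 / 3) * (m.choose d : ℝ) :=
          mul_le_mul_of_nonneg_right hE (Nat.cast_nonneg _)
        linarith
      calc ∑ k ∈ Finset.range (K+1), (((badH k).card : ℝ) + ((badL k).card : ℝ))
          ≤ ∑ _k ∈ Finset.range (K+1),
              2 * (Real.exp (-(d : ℝ) * lam ^ 2 * (1 - α - ξ) ^ 2 / 3) * (m.choose d : ℝ)) :=
            Finset.sum_le_sum h3
        _ = ((K:ℝ)+1) * (2 * (Real.exp (-(d : ℝ) * lam ^ 2 * (1 - α - ξ) ^ 2 / 3)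
              * (m.choose d : ℝ))) := by
            rw [Finset.sum_const, Finset.card_range, nsmul_eq_mul]
            push_cast
            ring
    have hK4 : ((K:ℝ)+1) ≤ 4 / ξ := by
      have h1 : ((A / s₀ : ℕ) : ℝ) ≤ (A:ℝ) / (s₀:ℝ) := Nat.cast_div_le
      have h2 : (A:ℝ) / (s₀:ℝ) ≤ (α*m) / (s₀:ℝ) := by
        apply div_le_div_of_nonneg_right ?_ (by linarith)
        · exact hAle
      have h3 : (α*m) / (s₀:ℝ) ≤ (α*m) / (ξ*m/2) := by
        apply div_le_div_of_nonneg_left (by positivity) (by linarith) (by linarith)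
      have h4 : (α*m) / (ξ*m/2) = 2*α/ξ := by
        field_simp
      have h5 : (K:ℝ) = ((A / s₀ : ℕ) : ℝ) + 1 := by
        rw [hKdef]
        push_cast
        ring
      have h6 : 2*α/ξ + 2 ≤ 4/ξ := by
        rw [div_add' _ _ _ (ne_of_gt hξ0), div_le_div_iff₀ hξ0 hξ0]
        nlinarith
      rw [h5]
      calc ((A / s₀ : ℕ) : ℝ) + 1 + 1 ≤ 2*α/ξ + 2 := by
            have := h1.trans (h2.trans (h3.trans_eq h4))
            linarith
        _ ≤ 4/ξ := h6
    have hfinal : ((D.filter (fun s => ¬ P s)).card : ℝ) ≤ X * D.card := by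
      have hEC0 : (0:ℝ) ≤ 2 * (Real.exp (-(d : ℝ) * lam ^ 2 * (1 - α - ξ) ^ 2 / 3)
          * (m.choose d : ℝ)) := by positivity
      calc ((D.filter (fun s => ¬ P s)).card : ℝ)
          ≤ ((K:ℝ)+1) * (2 * (Real.exp (-(d : ℝ) * lam ^ 2 * (1 - α - ξ) ^ 2 / 3)
              * (m.choose d : ℝ))) := hcount
        _ ≤ (4/ξ) * (2 * (Real.exp (-(d : ℝ) * lam ^ 2 * (1 - α - ξ) ^ 2 / 3)
              * (m.choose d : ℝ))) := mul_le_mul_of_nonneg_right hK4 hEC0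
        _ = X * (m.choose d : ℝ) := by
            rw [hXdef]
            field_simp
            ring
        _ = X * D.card := by rw [hNval]
    -- ENNReal conclusion
    have hsplitn : (D.filter (fun s => P s)).card + (D.filter (fun s => ¬ P s)).card = D.card :=
      Finset.card_filter_add_card_filter_not (fun s => P s)
    have hDR : (0:ℝ) < (D.card : ℝ) := by exact_mod_cast hNpos
    have hgoodge : (1 - X) * D.card ≤ ((D.filter (fun s => P s)).card : ℝ) := by
      have he : ((D.filter (fun s => P s)).card : ℝ)
          = (D.card : ℝ) - ((D.filter (fun s => ¬ P s)).card : ℝ) := by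
        have h7 : ((D.filter (fun s => P s)).card : ℝ)
            + ((D.filter (fun s => ¬ P s)).card : ℝ) = (D.card : ℝ) := by exact_mod_cast hsplitn
        linarith
      rw [he]
      nlinarith [hfinal]
    have hofr : (1 : ℝ≥0∞) - ENNReal.ofReal X = ENNReal.ofReal (1 - X) := by
      rw [ENNReal.ofReal_sub 1 hX0, ENNReal.ofReal_one]
    rw [hofr]
    have h1 : ENNReal.ofReal (1 - X)
        ≤ ENNReal.ofReal (((D.filter (fun s => P s)).card : ℝ) / (D.card : ℝ)) := by
      apply ENNReal.ofReal_le_ofReal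
      rw [le_div_iff₀ hDR]
      linarith
    have h2 : ENNReal.ofReal (((D.filter (fun s => P s)).card : ℝ) / (D.card : ℝ))
        = (D.card : ℝ≥0∞)⁻¹ * ((D.filter (fun s => P s)).card : ℝ≥0∞) := by
      rw [ENNReal.ofReal_div_of_pos hDR, ENNReal.ofReal_natCast, ENNReal.ofReal_natCast,
        ENNReal.div_eq_inv_mul]
    exact h1.trans_eq h2
  -- apply
  rw [uniformSubset_apply, ← hDdef]
  exact key _ _ (fun s hsd hg => fun i hi => hdet s hsd hg i hi)
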